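/- For three distinct k-dimensional subspaces F1, F2, F3 of C^4 (where 1 ≤ k ≤ 3), there exists a subspace F4 of C^4 such that F4 ⊕ F1 = C^4, F4 ⊕ F2 = C^4, and F4 ∩ F3 has positive dimension. -/
import Mathlib

open Module

variable {V : Type*} [AddCommGroup V] [Module ℂ V]

/-- A vector space is not the union of two proper subspaces. -/
lemma aux_not_union (p q : Submodule ℂ V) (hp : p ≠ ⊤) (hq : q ≠ ⊤) :
    ∃ x : V, x ∉ p ∧ x ∉ q := by
  obtain ⟨a, -, ha⟩ := SetLike.not_le_iff_exists.mp (hp ∘ top_le_iff.mp : ¬ ⊤ ≤ p)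
  obtain ⟨b, -, hb⟩ := SetLike.not_le_iff_exists.mp (hq ∘ top_le_iff.mp : ¬ ⊤ ≤ q)
  by_cases haq : a ∉ q
  · exact ⟨a, ha, haq⟩
  by_cases hbp : b ∉ p
  · exact ⟨b, hbp, hb⟩
  push_neg at haq hbp
  refine ⟨a + b, fun h => ha ?_, fun h => hb ?_⟩
  · simpa using p.sub_mem h hbp
  · simpa using q.sub_mem h haq

/-- Extension lemma. -/
lemma aux_extend (n : ℕ) (F1 F2 G : Submodule ℂ (Fin 4 → ℂ))
    (hd1 : Disjoint G F1) (hd2 : Disjoint G F2)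
    (heq : finrank ℂ F1 = finrank ℂ F2)
    (hdim : finrank ℂ G + finrank ℂ F1 + n = 4) :
    ∃ G' : Submodule ℂ (Fin 4 → ℂ), G ≤ G' ∧ Disjoint G' F1 ∧ Disjoint G' F2 ∧
      finrank ℂ G' + finrank ℂ F1 = 4 := by
  induction n generalizing G with
  | zero => exact ⟨G, le_rfl, hd1, hd2, by omega⟩
  | succ m ih =>
    have hV : finrank ℂ (Fin 4 → ℂ) = 4 := by simp
    have h1top : G ⊔ F1 ≠ ⊤ := by
      intro h
      have := Submodule.finrank_add_le_finrank_add_finrank G F1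
      rw [h] at this
      simp [hV] at this
      omega
    have h2top : G ⊔ F2 ≠ ⊤ := by
      intro h
      have := Submodule.finrank_add_le_finrank_add_finrank G F2
      rw [h] at this
      simp [hV] at this
      omega
    obtain ⟨w, hw1, hw2⟩ := aux_not_union _ _ h1top h2top
    have hwG : w ∉ G := fun h => hw1 (Submodule.mem_sup_left h)
    have hw0 : w ≠ 0 := fun h => hwG (h ▸ G.zero_mem)
    set G' := G ⊔ (ℂ ∙ w) with hG'
    have hdisj : ∀ F : Submodule ℂ (Fin 4 → ℂ), w ∉ G ⊔ F → Disjoint G F →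
        Disjoint G' F := by
      intro F hw hd
      rw [disjoint_iff_inf_le]
      rintro x ⟨hxG', hxF⟩
      obtain ⟨g, hg, y, hy, rfl⟩ := Submodule.mem_sup.mp hxG'
      obtain ⟨c, rfl⟩ := Submodule.mem_span_singleton.mp hy
      have hc : c = 0 := by
        by_contra hc
        apply hw
        have hS1 : g + c • w ∈ G ⊔ F := Submodule.mem_sup_right hxF
        have hS2 : g ∈ G ⊔ F := Submodule.mem_sup_left hg
        have := Submodule.smul_mem (G ⊔ F) c⁻¹ (Submodule.sub_mem _ hS1 hS2)
        simpa [smul_smul, inv_mul_cancel₀ hc] using this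
      simp only [hc, zero_smul, add_zero] at hxF ⊢
      exact (Submodule.mem_bot _).mp (hd.le_bot ⟨hg, hxF⟩) ▸ Submodule.zero_mem _
    have hGw : Disjoint G (ℂ ∙ w) := (Submodule.disjoint_span_singleton' hw0).mpr hwG
    have hrank : finrank ℂ G' = finrank ℂ G + 1 := by
      have key := Submodule.finrank_sup_add_finrank_inf_eq G (ℂ ∙ w)
      rw [disjoint_iff.mp hGw, finrank_span_singleton hw0] at key
      simpa [hG'] using key
    obtain ⟨G'', hle, d1, d2, hfin⟩ := ih G' (hdisj F1 hw1 hd1) (hdisj F2 hw2 hd2)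
      (by omega)
    exact ⟨G'', le_trans le_sup_left hle, d1, d2, hfin⟩

/-- For three distinct `k`-dimensional subspaces `F1, F2, F3` of `ℂ⁴` (`1 ≤ k ≤ 3`),
there exists a subspace `F4` complementary to both `F1` and `F2` such that
`F4 ⊓ F3` has positive dimension. -/
theorem exists_common_complement_meeting_third
    (k : ℕ) (hk1 : 1 ≤ k) (hk3 : k ≤ 3)
    (F1 F2 F3 : Submodule ℂ (Fin 4 → ℂ))
    (h1 : finrank ℂ F1 = k) (h2 : finrank ℂ F2 = k) (h3 : finrank ℂ F3 = k)
    (h12 : F1 ≠ F2) (h13 : F1 ≠ F3) (h23 : F2 ≠ F3) :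
    ∃ F4 : Submodule ℂ (Fin 4 → ℂ),
      IsCompl F4 F1 ∧ IsCompl F4 F2 ∧ 0 < finrank ℂ ↥(F4 ⊓ F3) := by
  -- find v ∈ F3 \ (F1 ∪ F2)
  have hn1 : ¬ F3 ≤ F1 := fun h => h13 (Submodule.eq_of_le_of_finrank_eq h (by omega)).symm
  have hn2 : ¬ F3 ≤ F2 := fun h => h23 (Submodule.eq_of_le_of_finrank_eq h (by omega)).symm
  obtain ⟨a, haF3, ha1⟩ := SetLike.not_le_iff_exists.mp hn1
  obtain ⟨b, hbF3, hb2⟩ := SetLike.not_le_iff_exists.mp hn2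
  obtain ⟨v, hvF3, hv1, hv2⟩ : ∃ v, v ∈ F3 ∧ v ∉ F1 ∧ v ∉ F2 := by
    by_cases ha2 : a ∉ F2
    · exact ⟨a, haF3, ha1, ha2⟩
    by_cases hb1 : b ∉ F1
    · exact ⟨b, hbF3, hb1, hb2⟩
    push_neg at ha2 hb1
    exact ⟨a + b, F3.add_mem haF3 hbF3,
      fun h => ha1 (by simpa using F1.sub_mem h hb1),
      fun h => hb2 (by simpa using F2.sub_mem h ha2)⟩
  have hv0 : v ≠ 0 := fun h => hv1 (h ▸ F1.zero_mem)
  have hd1 : Disjoint (ℂ ∙ v) F1 := ((Submodule.disjoint_span_singleton' hv0).mpr hv1).symm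
  have hd2 : Disjoint (ℂ ∙ v) F2 := ((Submodule.disjoint_span_singleton' hv0).mpr hv2).symm
  obtain ⟨F4, hle, d1, d2, hfin⟩ := aux_extend (3 - k) F1 F2 (ℂ ∙ v) hd1 hd2 (by omega)
    (by rw [finrank_span_singleton hv0]; omega)
  have hV : finrank ℂ (Fin 4 → ℂ) = 4 := by simp
  refine ⟨F4, ⟨d1, ?_⟩, ⟨d2, ?_⟩, ?_⟩
  · rw [codisjoint_iff]
    exact Submodule.eq_top_of_disjoint _ _ (by omega) d1
  · rw [codisjoint_iff]
    exact Submodule.eq_top_of_disjoint _ _ (by omega) d2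
  · have hmem : v ∈ F4 ⊓ F3 := ⟨hle (Submodule.mem_span_singleton_self v), hvF3⟩
    have : Nontrivial (F4 ⊓ F3 : Submodule ℂ (Fin 4 → ℂ)) :=
      ⟨⟨v, hmem⟩, 0, by simpa using hv0⟩
    exact finrank_pos
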